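/- Let f : ℝ → ℝ be twice differentiable with lim_{x→∞} f(x) = L for some real L. If f'(b) ≤ 0 for some b ∈ (a, ∞), then there exists c ∈ (a, ∞) with f''(c) ≥ 0. -/

import Mathlib

open Real Filter Set

theorem stmt_1 (f f' f'' : ℝ → ℝ) (a b L : ℝ)
    (hf' : ∀ x, HasDerivAt f (f' x) x)
    (hf'' : ∀ x, HasDerivAt f' (f'' x) x)
    (hlim : Tendsto f atTop (nhds L))
    (hb : b ∈ Set.Ioi a) (hfb : f' b ≤ 0) :
    ∃ c ∈ Set.Ioi a, 0 ≤ f'' c := by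
  by_contra h
  push_neg at h
  -- f' is strictly decreasing on Ici b
  have hderiv : ∀ x, deriv f' x = f'' x := fun x => (hf'' x).deriv
  have hanti : StrictAntiOn f' (Set.Ici b) := by
    apply strictAntiOn_of_deriv_neg (convex_Ici b)
      (fun x _ => (hf'' x).continuousAt.continuousWithinAt)
    intro x hx
    rw [interior_Ici] at hx
    rw [hderiv]
    exact h x (show a < x from lt_trans hb hx)
  have hm : f' (b + 1) < 0 :=
    lt_of_lt_of_le (hanti (Set.self_mem_Ici) (Set.mem_Ici.mpr (by linarith)) (by linarith)) hfb
  set m := f' (b + 1) with hmdef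
  -- g x = f x - m * x is antitone on Ici (b+1)
  have hg : ∀ x : ℝ, HasDerivAt (fun x => f x - m * x) (f' x - m) x := by
    intro x
    have := (hf' x).sub ((hasDerivAt_id x).const_mul m)
    exact this.congr_deriv (by ring)
  have hganti : AntitoneOn (fun x => f x - m * x) (Set.Ici (b + 1)) := by
    apply antitoneOn_of_deriv_nonpos (convex_Ici (b + 1))
      (fun x _ => ((hg x).continuousAt).continuousWithinAt)
    · intro x hx
      exact ((hg x).differentiableAt).differentiableWithinAt
    · intro x hx
      rw [interior_Ici] at hx
      rw [(hg x).deriv]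
      have : f' x ≤ m := le_of_lt (hanti (Set.mem_Ici.mpr (by linarith)) (Set.mem_Ici.mpr (by have := Set.mem_Ioi.mp hx; linarith)) (by have := Set.mem_Ioi.mp hx; linarith))
      linarith
  -- hence f x ≤ C + m x for x ≥ b+1
  have hbd : ∀ x ≥ b + 1, f x ≤ (f (b + 1) - m * (b + 1)) + m * x := by
    intro x hx
    have := hganti (le_refl (b + 1)) hx hx
    simp only at this
    linarith
  have hbot : Tendsto f atTop atBot := by
    apply tendsto_atBot_mono' atTop (eventually_atTop.mpr ⟨b + 1, hbd⟩)
    have h1 : Tendsto (fun x : ℝ => m * x) atTop atBot := by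
      exact Tendsto.const_mul_atTop_of_neg hm tendsto_id
    simpa using tendsto_atBot_add_const_left atTop (f (b + 1) - m * (b + 1)) h1
  exact not_tendsto_nhds_of_tendsto_atBot hbot L hlim
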